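/- In the aⁿbⁿ-shift, a word w ∈ L(X_ab) is synchronizing if and only if 'ba' occurs in w as a contiguous subword. In particular, for i, j ≥ 1 the word aⁱbʲ is not synchronizing: if i ≤ j then (b a^{j-i}, a) and (b a^{j-i+1}, ba) lie in E(aⁱbʲ) but (b a^{j-i}, ba) does not. -/
import Mathlib


/-- `w` occurs as a (contiguous) factor of the bi-infinite sequence `x`. -/
def IsFactor {A : Type*} (w : List A) (x : ℤ → A) : Prop :=
  ∃ k : ℤ, ∀ i : Fin w.length, x (k + (i : ℕ)) = w.get i

/-- The language of a shift space `X ⊆ A^ℤ`: all finite words occurring in elements of `X`. -/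
def Lang {A : Type*} (X : Set (ℤ → A)) : Set (List A) :=
  {w | ∃ x ∈ X, IsFactor w x}

/-- The context of a word `w` relative to a language `L`:
`E(w) = {(a,b) : a ++ w ++ b ∈ L}`. -/
def Ctx {A : Type*} (L : Set (List A)) (w : List A) : Set (List A × List A) :=
  {p | p.1 ++ w ++ p.2 ∈ L}

/-- `w` is a synchronizing word for the language `L`: whenever `u ++ w ∈ L` and
`w ++ v ∈ L`, also `u ++ w ++ v ∈ L`. -/
def SyncWord {A : Type*} (L : Set (List A)) (w : List A) : Prop :=
  ∀ u v : List A, u ++ w ∈ L → w ++ v ∈ L → u ++ w ++ v ∈ L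

/-- The basic blocks `aⁿbⁿ` (with `a = 0`, `b = 1`), `n ≥ 1`. -/
def abBlocks : Set (List (Fin 2)) :=
  {w | ∃ n : ℕ, 1 ≤ n ∧ w = List.replicate n (0 : Fin 2) ++ List.replicate n 1}

/-- Finite concatenations of the blocks `aⁿbⁿ`. -/
def abConcat : Set (List (Fin 2)) :=
  {z | ∃ L : List (List (Fin 2)), (∀ w ∈ L, w ∈ abBlocks) ∧ z = L.flatten}

/-- The language of the `aⁿbⁿ`-shift: all factors of concatenations of the blocks. -/
def LangAB : Set (List (Fin 2)) :=
  {w | ∃ z ∈ abConcat, w <:+: z}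

section AB

open List

lemma rep_add {a b c : ℕ} (h : a + b = c) (x : Fin 2) :
    List.replicate a x ++ List.replicate b x = List.replicate c x := by
  rw [← List.replicate_add, h]

lemma rep_glue {a b c : ℕ} (h : a + b = c) (x : Fin 2) (r : List (Fin 2)) :
    List.replicate a x ++ (List.replicate b x ++ r) = List.replicate c x ++ r := by
  rw [← List.append_assoc, rep_add h]

lemma mem_abConcat_block {n : ℕ} (hn : 1 ≤ n) :
    (List.replicate n (0:Fin 2) ++ List.replicate n 1) ∈ abConcat :=
  ⟨[List.replicate n (0:Fin 2) ++ List.replicate n 1],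
    by rintro w hw; simp at hw; exact hw ▸ ⟨n, hn, rfl⟩, by simp⟩

lemma abConcat_append {x y : List (Fin 2)} (hx : x ∈ abConcat) (hy : y ∈ abConcat) :
    x ++ y ∈ abConcat := by
  obtain ⟨L1, h1, rfl⟩ := hx; obtain ⟨L2, h2, rfl⟩ := hy
  refine ⟨L1 ++ L2, ?_, (List.flatten_append ..).symm⟩
  intro w hw; rcases List.mem_append.mp hw with h|h
  exacts [h1 w h, h2 w h]

lemma abConcat_head {c : List (Fin 2)} (hc : c ∈ abConcat) (t : List (Fin 2)) :
    c ≠ 1 :: t := by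
  obtain ⟨L, hL, rfl⟩ := hc
  cases L with
  | nil => simp
  | cons B Bs =>
    obtain ⟨n, hn, rfl⟩ := hL B (by simp)
    intro h
    rw [List.flatten_cons] at h
    obtain ⟨m, rfl⟩ : ∃ m, n = m + 1 := ⟨n - 1, by omega⟩
    rw [List.replicate_succ] at h
    simp only [List.cons_append, List.cons.injEq] at h
    exact absurd h.1 (by decide)

lemma zeros_cancel : ∀ (a b : ℕ) (x y : List (Fin 2)),
    List.replicate a 0 ++ 1 :: x = List.replicate b 0 ++ 1 :: y → a = b ∧ x = y := by
  intro a
  induction a with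
  | zero =>
    intro b x y h
    cases b with
    | zero => simpa using h
    | succ b =>
      rw [List.replicate_succ] at h
      simp only [List.replicate_zero, List.nil_append, List.cons_append] at h
      injection h with h1 _
      exact absurd h1 (by decide)
  | succ a ih =>
    intro b x y h
    cases b with
    | zero =>
      rw [List.replicate_succ] at h
      simp only [List.replicate_zero, List.nil_append, List.cons_append] at h
      injection h with h1 _
      exact absurd h1 (by decide)
    | succ b =>
      rw [List.replicate_succ, List.replicate_succ] at h
      simp only [List.cons_append, List.cons.injEq] at h
      obtain ⟨h1, h2⟩ := ih b x y h.2
      exact ⟨by omega, h2⟩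

lemma pairwise_rep (a : Fin 2) (n : ℕ) : (List.replicate n a).Pairwise (· ≤ ·) :=
  List.pairwise_replicate.2 (Or.inr le_rfl)

lemma block_no10 (n : ℕ) :
    ¬ ([1, 0] <:+: (List.replicate n (0:Fin 2) ++ List.replicate n 1)) := by
  intro h
  have hp : (List.replicate n (0:Fin 2) ++ List.replicate n 1).Pairwise (· ≤ ·) := by
    rw [List.pairwise_append]
    refine ⟨pairwise_rep _ _, pairwise_rep _ _, ?_⟩
    intro x hx y hy
    rw [List.eq_of_mem_replicate hx, List.eq_of_mem_replicate hy]
    decide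
  have := List.Pairwise.sublist h.sublist hp
  rw [List.pairwise_cons] at this
  exact absurd (this.1 0 (by simp)) (by decide)

lemma splitAt10 : ∀ Bs : List (List (Fin 2)), (∀ w ∈ Bs, w ∈ abBlocks) →
    ∀ s t : List (Fin 2), Bs.flatten = s ++ 1 :: 0 :: t →
    s ++ [1] ∈ abConcat ∧ (0 :: t) ∈ abConcat := by
  intro Bs
  induction Bs with
  | nil => intro _ s t h; simp at h
  | cons B Bs ih =>
    intro hall s t h
    obtain ⟨n, hn, hB⟩ := hall B (by simp)
    have hBs : ∀ w ∈ Bs, w ∈ abBlocks := fun w hw => hall w (by simp [hw])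
    rw [List.flatten_cons] at h
    rcases List.append_eq_append_iff.mp h with ⟨l, hs, hf⟩ | ⟨l, hB', hf⟩
    · -- hs : s = B ++ l, hf : Bs.flatten = l ++ 1::0::t
      obtain ⟨h1, h2⟩ := ih hBs l t hf
      refine ⟨?_, h2⟩
      rw [hs, List.append_assoc]
      exact abConcat_append (hB ▸ mem_abConcat_block hn) h1
    · -- hB' : B = s ++ l, hf : 1::0::t = l ++ Bs.flatten
      cases l with
      | nil =>
        exact absurd hf.symm (abConcat_head ⟨Bs, hBs, rfl⟩ (0 :: t))
      | cons x l =>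
        rw [List.cons_append] at hf
        injection hf with hx hf2
        obtain rfl := hx
        cases l with
        | nil =>
          rw [List.nil_append] at hf2
          constructor
          · have : s ++ [1] = B := by rw [hB']
            rw [this, hB]; exact mem_abConcat_block hn
          · rw [hf2]; exact ⟨Bs, hBs, rfl⟩
        | cons y l =>
          rw [List.cons_append] at hf2
          injection hf2 with hy _
          obtain rfl := hy
          refine absurd ⟨s, l, ?_⟩ (hB ▸ block_no10 n)
          rw [hB']; simp

lemma notE {n : ℕ} (hn : 1 ≤ n) (t : List (Fin 2)) :
    (List.replicate n (0:Fin 2) ++ List.replicate (n+1) 1 ++ t) ∉ abConcat := by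
  rintro ⟨L, hL, hflat⟩
  simp only [List.append_assoc] at hflat
  cases L with
  | nil =>
    have := congrArg List.length hflat
    simp at this
  | cons B Bs =>
    obtain ⟨k, hk, rfl⟩ := hL B (by simp)
    rw [List.flatten_cons] at hflat
    simp only [List.append_assoc] at hflat
    obtain ⟨k', rfl⟩ : ∃ k', k = k' + 1 := ⟨k - 1, by omega⟩
    have h1 : List.replicate (k'+1) (0:Fin 2) ++ 1 :: (List.replicate k' 1 ++ Bs.flatten)
        = List.replicate n (0:Fin 2) ++ 1 :: (List.replicate n 1 ++ t) := by
      have e1 : (1:Fin 2) :: (List.replicate k' 1 ++ Bs.flatten)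
          = List.replicate (k'+1) (1:Fin 2) ++ Bs.flatten := by
        rw [List.replicate_succ]; rfl
      have e2 : (1:Fin 2) :: (List.replicate n 1 ++ t)
          = List.replicate (n+1) (1:Fin 2) ++ t := by
        rw [List.replicate_succ]; rfl
      rw [e1, e2, ← hflat]
    obtain ⟨hkn, h2⟩ := zeros_cancel _ _ _ _ h1
    obtain rfl : n = k' + 1 := hkn.symm
    rw [List.replicate_succ', List.append_assoc] at h2
    have h3 : Bs.flatten = 1 :: t := by
      have := List.append_cancel_left h2
      simpa using this
    exact abConcat_head ⟨Bs, fun w hw => hL w (by simp [hw]), rfl⟩ t h3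

lemma lang_infix {v w : List (Fin 2)} (h : v <:+: w) (hw : w ∈ LangAB) : v ∈ LangAB := by
  obtain ⟨z, hz, hi⟩ := hw; exact ⟨z, hz, h.trans hi⟩

lemma notL1 {n : ℕ} (hn : 1 ≤ n) :
    (1 :: (List.replicate n (0:Fin 2) ++ List.replicate (n+1) 1)) ∉ LangAB := by
  rintro ⟨z, hz, s, t, hst⟩
  obtain ⟨L, hL, rfl⟩ := hz
  obtain ⟨m, rfl⟩ : ∃ m, n = m + 1 := ⟨n - 1, by omega⟩
  have heq : L.flatten
      = s ++ 1 :: 0 :: (List.replicate m 0 ++ (List.replicate (m+1+1) 1 ++ t)) := by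
    rw [← hst]
    simp [List.replicate_succ, List.append_assoc]
  have h := (splitAt10 L hL _ _ heq).2
  have h' : (List.replicate (m+1) (0:Fin 2) ++ List.replicate (m+1+1) 1 ++ t)
      ∈ abConcat := by
    rw [List.replicate_succ]
    simpa [List.append_assoc] using h
  exact notE (by omega) t h'

lemma M1 {n m : ℕ} (hn : 1 ≤ n) (hm : m ≤ n) :
    (1 :: (List.replicate n (0:Fin 2) ++ List.replicate m 1)) ∈ LangAB := by
  refine ⟨_, abConcat_append (mem_abConcat_block (le_refl 1)) (mem_abConcat_block hn),
    [0], List.replicate (n - m) 1, ?_⟩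
  show [0] ++ (1 :: (List.replicate n (0:Fin 2) ++ List.replicate m 1))
      ++ List.replicate (n-m) 1 = _
  simp only [List.cons_append, List.nil_append, List.append_assoc, List.singleton_append]
  rw [rep_add (by omega : m + (n - m) = n) 1]
  simp [List.replicate_succ]

lemma M3 {a b : ℕ} (hb : 1 ≤ b) (hab : a ≤ b) :
    (List.replicate a (0:Fin 2) ++ List.replicate b 1 ++ [0]) ∈ LangAB := by
  refine ⟨_, abConcat_append (mem_abConcat_block hb) (mem_abConcat_block (le_refl 1)),
    List.replicate (b - a) 0, [1], ?_⟩
  simp only [List.append_assoc]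
  rw [rep_glue (by omega : (b - a) + a = b) 0]
  simp [List.replicate_succ]

lemma M4 {n : ℕ} (hn : 1 ≤ n) :
    (1 :: (List.replicate n (0:Fin 2) ++ (List.replicate n 1 ++ [0]))) ∈ LangAB := by
  refine ⟨_, abConcat_append (mem_abConcat_block (le_refl 1))
    (abConcat_append (mem_abConcat_block hn) (mem_abConcat_block (le_refl 1))),
    [0], [1], ?_⟩
  simp [List.replicate_succ, List.append_assoc]

lemma not_sync (i j : ℕ) :
    ¬ SyncWord LangAB (List.replicate i (0:Fin 2) ++ List.replicate j 1) := by
  intro hs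
  set M := max (max i j) 1 with hM
  have hM1 : 1 ≤ M := le_max_right _ _
  have hiM : i ≤ M := le_trans (le_max_left _ _) (le_max_left _ _)
  have hjM : j ≤ M := le_trans (le_max_right _ _) (le_max_left _ _)
  have hu : (1 :: List.replicate (M - i) 0) ++
      (List.replicate i (0:Fin 2) ++ List.replicate j 1) ∈ LangAB := by
    have e : (1 :: List.replicate (M - i) (0:Fin 2)) ++
        (List.replicate i (0:Fin 2) ++ List.replicate j 1)
        = 1 :: (List.replicate M (0:Fin 2) ++ List.replicate j 1) := by
      simp only [List.cons_append]
      rw [rep_glue (by omega : (M - i) + i = M)]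
    rw [e]; exact M1 hM1 hjM
  have hv : (List.replicate i (0:Fin 2) ++ List.replicate j 1) ++
      (List.replicate (M - j + 1) 1 ++ [0]) ∈ LangAB := by
    have e : (List.replicate i (0:Fin 2) ++ List.replicate j 1) ++
        (List.replicate (M - j + 1) 1 ++ [0])
        = List.replicate i (0:Fin 2) ++ List.replicate (M+1) 1 ++ [0] := by
      simp only [List.append_assoc]
      rw [rep_glue (by omega : j + (M - j + 1) = M + 1)]
    rw [e]; exact M3 (by omega) (by omega)
  have hw := hs _ _ hu hv
  have hbad : (1 :: (List.replicate M (0:Fin 2) ++ List.replicate (M+1) 1)) ∈ LangAB := by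
    refine lang_infix ⟨[], [0], ?_⟩ hw
    simp only [List.nil_append, List.cons_append, List.append_assoc]
    rw [rep_glue (by omega : (M - i) + i = M), rep_glue (by omega : j + (M - j + 1) = M + 1)]
  exact notL1 hM1 hbad

lemma no10_shape : ∀ w : List (Fin 2), ¬ ([1,0] <:+: w) →
    ∃ i j, w = List.replicate i 0 ++ List.replicate j 1 := by
  intro w
  induction w with
  | nil => exact fun _ => ⟨0, 0, rfl⟩
  | cons x w ih =>
    intro h
    have hw : ¬ ([1,0] <:+: w) := fun hh => h (hh.trans (List.suffix_cons x w).isInfix)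
    obtain ⟨i, j, rfl⟩ := ih hw
    fin_cases x
    · exact ⟨i + 1, j, by rw [List.replicate_succ]; rfl⟩
    · cases i with
      | zero => exact ⟨0, j + 1, by rw [List.replicate_succ]; rfl⟩
      | succ i =>
        exact absurd ⟨[], List.replicate i 0 ++ List.replicate j 1,
          by simp [List.replicate_succ]⟩ h

lemma sync_of_10 {w : List (Fin 2)} (h : [1,0] <:+: w) : SyncWord LangAB w := by
  obtain ⟨p, q, rfl⟩ := h
  intro u v hu hv
  obtain ⟨z1, hz1, s1, t1, he1⟩ := hu
  obtain ⟨L1, hL1, rfl⟩ := hz1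
  obtain ⟨z2, hz2, s2, t2, he2⟩ := hv
  obtain ⟨L2, hL2, rfl⟩ := hz2
  have h1 := (splitAt10 L1 hL1 (s1 ++ (u ++ p)) (q ++ t1)
    (by rw [← he1]; simp)).1
  have h2 := (splitAt10 L2 hL2 (s2 ++ p) (q ++ (v ++ t2))
    (by rw [← he2]; simp)).2
  refine ⟨_, abConcat_append h1 h2, s1, t2, ?_⟩
  simp

end AB

/-- A word of the `aⁿbⁿ`-shift is synchronizing iff it contains `ba` as a contiguous
subword; in particular, for `i, j ≥ 1` with `i ≤ j` the word `aⁱbʲ` is not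
synchronizing: `(b a^{j-i}, a)` and `(b a^{j-i+1}, ba)` lie in `E(aⁱbʲ)` while
`(b a^{j-i}, ba)` does not. (Here `a = 0` and `b = 1`.) -/



theorem ab_shift_sync_iff :
    (∀ w : List (Fin 2), w ∈ LangAB → (SyncWord LangAB w ↔ [(1 : Fin 2), 0] <:+: w)) ∧
    (∀ i j : ℕ, 1 ≤ i → i ≤ j →
      ((1 : Fin 2) :: List.replicate (j - i) 0, [(0 : Fin 2)]) ∈
        Ctx LangAB (List.replicate i (0 : Fin 2) ++ List.replicate j 1) ∧
      ((1 : Fin 2) :: List.replicate (j - i + 1) 0, [(1 : Fin 2), 0]) ∈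
        Ctx LangAB (List.replicate i (0 : Fin 2) ++ List.replicate j 1) ∧
      ((1 : Fin 2) :: List.replicate (j - i) 0, [(1 : Fin 2), 0]) ∉
        Ctx LangAB (List.replicate i (0 : Fin 2) ++ List.replicate j 1) ∧
      ¬ SyncWord LangAB (List.replicate i (0 : Fin 2) ++ List.replicate j 1)) := by
  constructor
  · intro w _hw
    constructor
    · intro hs
      by_contra h10
      obtain ⟨i, j, rfl⟩ := no10_shape w h10
      exact not_sync i j hs
    · exact sync_of_10
  · intro i j hi hij
    refine ⟨?_, ?_, ?_, not_sync i j⟩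
    · show (1 :: List.replicate (j-i) (0:Fin 2)) ++
        (List.replicate i (0:Fin 2) ++ List.replicate j 1) ++ [0] ∈ LangAB
      have e : (1 :: List.replicate (j-i) (0:Fin 2)) ++
          (List.replicate i (0:Fin 2) ++ List.replicate j 1) ++ [0]
          = 1 :: (List.replicate j (0:Fin 2) ++ (List.replicate j 1 ++ [0])) := by
        simp only [List.cons_append, List.append_assoc]
        rw [rep_glue (by omega : (j-i)+i = j)]
      rw [e]; exact M4 (by omega)
    · show (1 :: List.replicate (j-i+1) (0:Fin 2)) ++
        (List.replicate i (0:Fin 2) ++ List.replicate j 1) ++ [1,0] ∈ LangAB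
      have e : (1 :: List.replicate (j-i+1) (0:Fin 2)) ++
          (List.replicate i (0:Fin 2) ++ List.replicate j 1) ++ [1,0]
          = 1 :: (List.replicate (j+1) (0:Fin 2) ++ (List.replicate (j+1) 1 ++ [0])) := by
        simp only [List.cons_append, List.append_assoc]
        rw [rep_glue (by omega : (j-i+1)+i = j+1),
          show ([1,0] : List (Fin 2)) = List.replicate 1 1 ++ [0] from rfl,
          rep_glue (by omega : j + 1 = j+1)]
      rw [e]; exact M4 (by omega)
    · intro hmem
      have hmem' : (1 :: List.replicate (j-i) (0:Fin 2)) ++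
          (List.replicate i (0:Fin 2) ++ List.replicate j 1) ++ [1,0] ∈ LangAB := hmem
      have hbad : (1 :: (List.replicate j (0:Fin 2) ++ List.replicate (j+1) 1)) ∈ LangAB := by
        refine lang_infix ⟨[], [0], ?_⟩ hmem'
        simp only [List.nil_append, List.cons_append, List.append_assoc]
        rw [rep_glue (by omega : (j-i)+i = j),
          show ([1,0] : List (Fin 2)) = List.replicate 1 1 ++ [0] from rfl,
          rep_glue (by omega : j + 1 = j+1)]
      exact notL1 (by omega) hbad
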